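/- Let Λ be a measurable space, μ a probability measure on Λ, and 𝒩, 𝒳 two sets of probability measures on Λ. Let f, g : Λ → ℝ be measurable functions with 0 ≤ f(λ), 0 ≤ g(λ) and f(λ) + g(λ) ≤ 1 for every λ ∈ Λ. Suppose ∫ (f + g) dν = 1 for every ν ∈ 𝒩, ∫ f dχ = 1 for every χ ∈ 𝒳, and ∫ g dμ = 0. Then ϖ(𝒩 ∪ 𝒳 | μ) ≤ ∫ f dμ. -/

import Mathlib

open MeasureTheory

/-- The asymmetric overlap `ϖ(𝒩|μ)`: the infimum of `μ Ω` over measurable sets `Ω`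
that have full measure for every measure in `𝒩`. -/
noncomputable def asymmetricOverlap {Λ : Type*} [MeasurableSpace Λ]
    (N : Set (Measure Λ)) (μ : Measure Λ) : ℝ :=
  sInf { x : ℝ | ∃ Ω : Set Λ, MeasurableSet Ω ∧ (∀ ν ∈ N, ν Ω = 1) ∧ x = (μ Ω).toReal }

/-- If a measurable function bounded above by `1` has integral `1` against a probability
measure, then it equals `1` almost everywhere (as a measure-one statement). -/
lemma meas_eq_one_of_integral_eq_one {Λ : Type*} [MeasurableSpace Λ]
    (ν : Measure Λ) [IsProbabilityMeasure ν] (h : Λ → ℝ) (hm : Measurable h)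
    (h0 : ∀ x, 0 ≤ h x) (h1 : ∀ x, h x ≤ 1) (hint : ∫ x, h x ∂ν = 1) :
    ν {x | h x = 1} = 1 := by
  have hInt : Integrable h ν := by
    refine (integrable_const (1 : ℝ)).mono' hm.aestronglyMeasurable ?_
    filter_upwards with x
    rw [Real.norm_eq_abs, abs_of_nonneg (h0 x)]; exact h1 x
  have hInt' : Integrable (fun x => 1 - h x) ν := (integrable_const (1 : ℝ)).sub hInt
  have hz : ∫ x, (1 - h x) ∂ν = 0 := by
    rw [integral_sub (integrable_const 1) hInt, hint, integral_const]
    simp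
  have hae : (fun x => 1 - h x) =ᵐ[ν] 0 := by
    rw [← integral_eq_zero_iff_of_nonneg (fun x => by simpa using h1 x) hInt']
    exact hz
  have : ν {x | ¬ h x = 1} = 0 := by
    refine measure_mono_null ?_ (ae_iff.mp hae)
    intro x hx
    simp only [Set.mem_setOf_eq] at hx ⊢
    intro hc
    exact hx (by linarith [sub_eq_zero.mp hc])
  have heq : {x | h x = 1} = h ⁻¹' {1} := rfl
  rw [heq, ← prob_compl_eq_zero_iff (μ := ν) (hm (measurableSet_singleton 1))]
  refine measure_mono_null ?_ this
  intro x hx; exact hx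

theorem tripartite_overlap_le_quantum_prob {Λ : Type*} [MeasurableSpace Λ]
    (μ : Measure Λ) [IsProbabilityMeasure μ]
    (N X : Set (Measure Λ))
    (hN : ∀ ν ∈ N, IsProbabilityMeasure ν) (hX : ∀ χ ∈ X, IsProbabilityMeasure χ)
    (f g : Λ → ℝ) (hfm : Measurable f) (hgm : Measurable g)
    (hf0 : ∀ x : Λ, 0 ≤ f x) (hg0 : ∀ x : Λ, 0 ≤ g x)
    (hfg1 : ∀ x : Λ, f x + g x ≤ 1)
    (hN1 : ∀ ν ∈ N, ∫ x, f x + g x ∂ν = 1)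
    (hX1 : ∀ χ ∈ X, ∫ x, f x ∂χ = 1)
    (hμ0 : ∫ x, g x ∂μ = 0) :
    asymmetricOverlap (N ∪ X) μ ≤ ∫ x, f x ∂μ := by
  -- the witness set
  set A : Set Λ := {x | f x = 1} with hA
  set B : Set Λ := {x | f x + g x = 1} ∩ {x | g x ≠ 0} with hB
  set Ω : Set Λ := A ∪ B with hΩ
  have hAm : MeasurableSet A := hfm (measurableSet_singleton 1)
  have hBm : MeasurableSet B :=
    ((hfm.add hgm) (measurableSet_singleton 1)).inter
      (hgm (measurableSet_singleton 0)).compl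
  have hΩm : MeasurableSet Ω := hAm.union hBm
  -- μ-integrability of f and g
  have hfInt : Integrable f μ := by
    refine (integrable_const (1 : ℝ)).mono' hfm.aestronglyMeasurable ?_
    filter_upwards with x
    rw [Real.norm_eq_abs, abs_of_nonneg (hf0 x)]
    linarith [hfg1 x, hg0 x]
  have hgInt : Integrable g μ := by
    refine (integrable_const (1 : ℝ)).mono' hgm.aestronglyMeasurable ?_
    filter_upwards with x
    rw [Real.norm_eq_abs, abs_of_nonneg (hg0 x)]
    linarith [hfg1 x, hf0 x]
  -- g = 0 μ-a.e.
  have hgae : g =ᵐ[μ] 0 := by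
    rw [← integral_eq_zero_iff_of_nonneg (fun x => hg0 x) hgInt]
    exact hμ0
  have hμB : μ B = 0 := by
    refine measure_mono_null ?_ (ae_iff.mp hgae)
    intro x hx
    exact hx.2
  -- μ Ω ≤ μ A
  have hμΩ : μ Ω ≤ μ A := by
    calc μ Ω ≤ μ A + μ B := measure_union_le A B
      _ = μ A := by rw [hμB, add_zero]
  -- full measure for every measure in N ∪ X
  have hfull : ∀ ν ∈ N ∪ X, ν Ω = 1 := by
    rintro ν (hν | hν)
    · haveI := hN ν hν
      have h1 : ν {x | f x + g x = 1} = 1 :=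
        meas_eq_one_of_integral_eq_one ν (fun x => f x + g x) (hfm.add hgm)
          (fun x => add_nonneg (hf0 x) (hg0 x)) hfg1 (hN1 ν hν)
      have hsub : {x | f x + g x = 1} ⊆ Ω := by
        intro x hx
        by_cases hgx : g x = 0
        · left
          simp only [hA, Set.mem_setOf_eq]
          have : f x + g x = 1 := hx
          linarith [this, hgx]
        · right
          exact ⟨hx, hgx⟩
      exact le_antisymm prob_le_one (h1 ▸ measure_mono hsub)
    · haveI := hX ν hν
      have h1 : ν A = 1 :=
        meas_eq_one_of_integral_eq_one ν f hfm hf0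
          (fun x => by linarith [hfg1 x, hg0 x]) (hX1 ν hν)
      exact le_antisymm prob_le_one (h1 ▸ measure_mono Set.subset_union_left)
  -- (μ A).toReal ≤ ∫ f dμ  (Markov-type bound)
  have hAf : (μ A).toReal ≤ ∫ x, f x ∂μ := by
    have h1 : (μ A).toReal = ∫ x in A, f x ∂μ := by
      rw [setIntegral_congr_fun hAm (g := fun _ => (1 : ℝ)) (fun x hx => hx)]
      simp [setIntegral_const, Measure.real]
    rw [h1]
    exact setIntegral_le_integral hfInt (Filter.Eventually.of_forall hf0)
  -- conclude
  have hmem : (μ Ω).toReal ∈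
      { x : ℝ | ∃ Ω : Set Λ, MeasurableSet Ω ∧ (∀ ν ∈ N ∪ X, ν Ω = 1) ∧ x = (μ Ω).toReal } :=
    ⟨Ω, hΩm, hfull, rfl⟩
  have hbdd : BddBelow
      { x : ℝ | ∃ Ω : Set Λ, MeasurableSet Ω ∧ (∀ ν ∈ N ∪ X, ν Ω = 1) ∧ x = (μ Ω).toReal } := by
    refine ⟨0, ?_⟩
    rintro x ⟨Ω', _, _, rfl⟩
    exact ENNReal.toReal_nonneg
  calc asymmetricOverlap (N ∪ X) μ ≤ (μ Ω).toReal := csInf_le hbdd hmem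
    _ ≤ (μ A).toReal := ENNReal.toReal_mono (measure_ne_top μ A) hμΩ
    _ ≤ ∫ x, f x ∂μ := hAf
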